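/- Let B/A be a G-Galois extension of commutative rings for a finite group G, and let q: G → Q be a surjective group homomorphism with kernel K. Then the ring (∏_{Q} B)^G, where G acts on the product ∏_{a ∈ Q} B by g·(l_a)_a = (g·l_{q(g)⁻¹a})_a, is isomorphic as a ring to the fixed subring B^K, via the map B^K → ∏_Q B sending l to (g·l)_{q(g) ∈ Q}. -/
import Mathlib


open scoped Pointwise

variable {G Q B : Type*}

/-- The fixed subring of `∏_Q B` under the twisted `G`-action
`g·(l_a)_a = (g·l_{q(g)⁻¹a})_a`. -/
def twistedFixedSubring [Group G] [Group Q] [CommRing B] [MulSemiringAction G B]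
    (q : G →* Q) : Subring (Q → B) where
  carrier := {l | ∀ (g : G) (a : Q), g • l ((q g)⁻¹ * a) = l a}
  mul_mem' := by
    intro l m hl hm g a
    simp only [Pi.mul_apply, smul_mul']
    rw [hl g a, hm g a]
  one_mem' := by intro g a; simp
  add_mem' := by
    intro l m hl hm g a
    simp only [Pi.add_apply, smul_add]
    rw [hl g a, hm g a]
  zero_mem' := by intro g a; simp
  neg_mem' := by
    intro l hl g a
    simp only [Pi.neg_apply, smul_neg]
    rw [hl g a]

/-- The fixed subring `B^K` for `K = ker q`. -/
def kerFixedSubring [Group G] [Group Q] [CommRing B] [MulSemiringAction G B]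
    (q : G →* Q) : Subring B where
  carrier := {b | ∀ g ∈ q.ker, g • b = b}
  mul_mem' := by intro b c hb hc g hg; rw [smul_mul', hb g hg, hc g hg]
  one_mem' := by intro g hg; simp
  add_mem' := by intro b c hb hc g hg; rw [smul_add, hb g hg, hc g hg]
  zero_mem' := by intro g hg; simp
  neg_mem' := by intro b hb g hg; rw [smul_neg, hb g hg]

/-- for a `G`-Galois extension `B/A` of commutative rings (`B^G = A`)
and a surjective homomorphism `q : G → Q` with kernel `K`, the ring `(∏_Q B)^G`
(with the twisted action) is isomorphic to `B^K`, via `l ↦ (g·l)_{q(g)}`. -/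
theorem pushforward_torsor_fixed_ring
    [Group G] [Finite G] [Group Q] [CommRing B] [MulSemiringAction G B]
    (A : Type*) [CommRing A] [Algebra A B]
    (hGalois : ∀ b : B, (∀ g : G, g • b = b) ↔ b ∈ (algebraMap A B).range)
    (q : G →* Q) (hq : Function.Surjective q) :
    ∃ e : kerFixedSubring q ≃+* twistedFixedSubring q,
      ∀ (l : kerFixedSubring q) (g : G),
        ((e l).1 (q g) : B) = g • (l.1 : B) := by
  
  classical
  obtain ⟨s, hs⟩ := hq.hasRightInverse
  -- key: if q g = q g' then g • l = g' • l for l in kerFixedSubring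
  have key : ∀ (l : kerFixedSubring q) (g g' : G), q g = q g' → g • (l.1 : B) = g' • (l.1 : B) := by
    intro l g g' h
    have hk : g'⁻¹ * g ∈ q.ker := by
      simp [MonoidHom.mem_ker, h]
    have := l.2 (g'⁻¹ * g) hk
    calc g • (l.1 : B) = (g' * (g'⁻¹ * g)) • (l.1 : B) := by rw [mul_inv_cancel_left]
      _ = g' • ((g'⁻¹ * g) • (l.1 : B)) := by rw [smul_smul]
      _ = g' • (l.1 : B) := by rw [this]
  have tomem : ∀ l : kerFixedSubring q, (fun a => s a • (l.1 : B)) ∈ twistedFixedSubring q := by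
    intro l g a
    show g • (s ((q g)⁻¹ * a) • (l.1 : B)) = s a • (l.1 : B)
    rw [smul_smul]
    apply key
    rw [map_mul, hs, hs, mul_inv_cancel_left]
  have invmem : ∀ m : twistedFixedSubring q, (m.1 1 : B) ∈ kerFixedSubring q := by
    intro m g hg
    have := m.2 g 1
    rwa [MonoidHom.mem_ker.mp hg, inv_one, one_mul] at this
  refine ⟨{ toFun := fun l => ⟨fun a => s a • (l.1 : B), tomem l⟩
            invFun := fun m => ⟨m.1 1, invmem m⟩
            left_inv := ?_
            right_inv := ?_
            map_mul' := ?_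
            map_add' := ?_ }, ?_⟩
  · intro l
    ext
    show s 1 • (l.1 : B) = l.1
    exact l.2 (s 1) (by simp [MonoidHom.mem_ker, hs 1])
  · intro m
    ext a
    show s a • (m.1 1 : B) = m.1 a
    have := m.2 (s a) a
    rwa [hs, inv_mul_cancel] at this
  · intro l l'
    ext a
    show s a • ((l.1 : B) * l'.1) = s a • (l.1 : B) * s a • (l'.1 : B)
    rw [smul_mul']
  · intro l l'
    ext a
    show s a • ((l.1 : B) + l'.1) = s a • (l.1 : B) + s a • (l'.1 : B)
    rw [smul_add]
  · intro l g
    show s (q g) • (l.1 : B) = g • (l.1 : B)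
    exact key l (s (q g)) g (hs _)
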